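/- The matrix X = Lᵀ (S⁻¹ - C⁻¹) L equals (I - H)⁻¹ - I, and its eigenvalues are θ_k = λ_k / (1 - λ_k) for k = 1, …, s, where λ_k are the eigenvalues of H; in particular all θ_k are nonnegative. -/

import Mathlib

open Matrix

section Aux

variable {n : ℕ}

lemma posDef_conj_aux {A : Matrix (Fin n) (Fin n) ℝ} (N : Matrix (Fin n) (Fin n) ℝ)
    (hA : A.PosDef) (hN : IsUnit N.det) : (N * A * Nᵀ).PosDef := by
  rw [posDef_iff_dotProduct_mulVec]
  constructor
  · have h := hA.1
    simp only [Matrix.IsHermitian, conjTranspose_eq_transpose_of_trivial] at h ⊢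
    rw [transpose_mul, transpose_mul, transpose_transpose, h, Matrix.mul_assoc]
  · intro x hx
    have hNT : IsUnit Nᵀ.det := by rwa [Matrix.det_transpose]
    have hy : Nᵀ *ᵥ x ≠ 0 := by
      intro h0
      exact hx ((Matrix.mulVec_injective_iff_isUnit.mpr
        ((Matrix.isUnit_iff_isUnit_det Nᵀ).mpr hNT))
        (by simpa [Matrix.mulVec_zero] using h0))
    have key : star x ⬝ᵥ (N * A * Nᵀ) *ᵥ x = star (Nᵀ *ᵥ x) ⬝ᵥ A *ᵥ (Nᵀ *ᵥ x) := by
      simp only [star_trivial, ← Matrix.mulVec_mulVec, Matrix.dotProduct_mulVec,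
        ← Matrix.mulVec_transpose]
    rw [key]
    exact hA.dotProduct_mulVec_pos hy

end Aux

/-- `X = Lᵀ (S⁻¹ - C⁻¹) L` equals `(I - H)⁻¹ - I`, and if `λ` is an
eigenvalue of `H` then `λ/(1-λ)` is a (nonnegative) eigenvalue of `X`. -/
theorem stmt_2 {m s : ℕ}
    (B : Matrix (Fin m) (Fin m) ℝ) (C : Matrix (Fin s) (Fin s) ℝ)
    (E : Matrix (Fin m) (Fin s) ℝ) (L : Matrix (Fin s) (Fin s) ℝ)
    (hA : (Matrix.fromBlocks B E Eᵀ C).PosDef)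
    (hLtri : ∀ i j : Fin s, i < j → L i j = 0)
    (hL : C = L * Lᵀ) (hLdet : IsUnit L.det)
    (H : Matrix (Fin s) (Fin s) ℝ) (hH : H = L⁻¹ * Eᵀ * B⁻¹ * E * (Lᵀ)⁻¹)
    (S : Matrix (Fin s) (Fin s) ℝ) (hS : S = C - Eᵀ * B⁻¹ * E)
    (X : Matrix (Fin s) (Fin s) ℝ) (hX : X = Lᵀ * (S⁻¹ - C⁻¹) * L) :
    X = (1 - H)⁻¹ - 1 ∧
      ∀ lam : ℝ, (∃ v : Fin s → ℝ, v ≠ 0 ∧ H *ᵥ v = lam • v) →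
        (∃ w : Fin s → ℝ, w ≠ 0 ∧ X *ᵥ w = (lam / (1 - lam)) • w) ∧
          0 ≤ lam / (1 - lam) := by
  -- rewrite `hA` with conjTranspose form
  have hA' : (Matrix.fromBlocks B E Eᴴ C).PosDef := by
    rwa [conjTranspose_eq_transpose_of_trivial]
  -- B is positive definite
  have hB : B.PosDef := by
    rw [posDef_iff_dotProduct_mulVec]
    constructor
    · have h := congrArg Matrix.toBlocks₁₁ hA'.1
      simpa [Matrix.IsSymm, Matrix.fromBlocks_transpose] using h
    · intro x hx
      have hxe : (Sum.elim x (0 : Fin s → ℝ)) ≠ 0 := by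
        intro h0
        exact hx (funext fun i => by simpa using congrFun h0 (Sum.inl i))
      have := hA.dotProduct_mulVec_pos hxe
      simpa [Matrix.fromBlocks_mulVec, Matrix.dotProduct_block, Function.star_sumElim] using this
  haveI : Invertible B := hB.isUnit.invertible
  -- S is positive definite
  have hSpd : S.PosDef := by
    rw [posDef_iff_dotProduct_mulVec]
    constructor
    · have hSh : (C - Eᴴ * B⁻¹ * E).IsHermitian :=
        (IsHermitian.fromBlocks₁₁ E C hB.1).mp hA'.1
      rwa [hS, ← conjTranspose_eq_transpose_of_trivial E]
    · intro x hx
      have hxe : (Sum.elim (-((B⁻¹ * E) *ᵥ x)) x) ≠ 0 := by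
        intro h0
        exact hx (funext fun i => by simpa using congrFun h0 (Sum.inr i))
      have hpos := hA'.dotProduct_mulVec_pos hxe
      have hsc := Matrix.schur_complement_eq₁₁ (A := B) E C (-((B⁻¹ * E) *ᵥ x)) x hB.1
      rw [Matrix.dotProduct_mulVec, hsc, neg_add_cancel] at hpos
      simp only [star_zero, Matrix.zero_vecMul, zero_dotProduct, zero_add] at hpos
      rw [hS, ← conjTranspose_eq_transpose_of_trivial E, Matrix.dotProduct_mulVec]
      exact hpos
  -- H is positive semidefinite
  have hHpsd : H.PosSemidef := by
    have h := (hB.inv).posSemidef.conjTranspose_mul_mul_same (E * (Lᵀ)⁻¹)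
    have heq : (E * (Lᵀ)⁻¹)ᴴ * B⁻¹ * (E * (Lᵀ)⁻¹) = H := by
      rw [hH, conjTranspose_eq_transpose_of_trivial, transpose_mul,
        Matrix.transpose_nonsing_inv, transpose_transpose]
      simp only [Matrix.mul_assoc]
    rwa [heq] at h
  have hLTdet : IsUnit Lᵀ.det := by rwa [Matrix.det_transpose]
  have h1 : L * L⁻¹ = 1 := Matrix.mul_nonsing_inv L hLdet
  have h1' : L⁻¹ * L = 1 := Matrix.nonsing_inv_mul L hLdet
  have h2 : (Lᵀ)⁻¹ * Lᵀ = 1 := Matrix.nonsing_inv_mul _ hLTdet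
  have h2' : Lᵀ * (Lᵀ)⁻¹ = 1 := Matrix.mul_nonsing_inv _ hLTdet
  -- the similarity identity
  have hLHL : L * H * Lᵀ = Eᵀ * B⁻¹ * E := by
    rw [hH]
    simp only [Matrix.mul_assoc, h2, Matrix.mul_one]
    rw [← Matrix.mul_assoc L L⁻¹, h1, Matrix.one_mul]
  have hSsim : S = L * (1 - H) * Lᵀ := by
    rw [Matrix.mul_sub, Matrix.mul_one, Matrix.sub_mul, hLHL, ← hL, ← hS]
  -- 1 - H is positive definite
  have hIHeq : 1 - H = L⁻¹ * S * (L⁻¹)ᵀ := by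
    rw [hSsim, Matrix.transpose_nonsing_inv]
    symm
    calc L⁻¹ * (L * (1 - H) * Lᵀ) * (Lᵀ)⁻¹
        = (L⁻¹ * L) * (1 - H) * (Lᵀ * (Lᵀ)⁻¹) := by
          simp only [Matrix.mul_assoc]
      _ = 1 - H := by rw [h1', h2', Matrix.one_mul, Matrix.mul_one]
  have hIH : (1 - H).PosDef := by
    rw [hIHeq]
    exact posDef_conj_aux L⁻¹ hSpd (Matrix.isUnit_nonsing_inv_det L hLdet)
  have hIHdet : IsUnit (1 - H).det := hIH.det_pos.ne'.isUnit
  -- part 1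
  have hSinv : S⁻¹ = (Lᵀ)⁻¹ * ((1 - H)⁻¹ * L⁻¹) := by
    rw [hSsim, Matrix.mul_inv_rev, Matrix.mul_inv_rev]
  have hCinv : C⁻¹ = (Lᵀ)⁻¹ * L⁻¹ := by rw [hL, Matrix.mul_inv_rev]
  have hXeq : X = (1 - H)⁻¹ - 1 := by
    rw [hX, hSinv, hCinv, Matrix.mul_sub, Matrix.sub_mul]
    rw [← Matrix.mul_assoc Lᵀ (Lᵀ)⁻¹, ← Matrix.mul_assoc Lᵀ (Lᵀ)⁻¹, h2',
      Matrix.one_mul, Matrix.one_mul, Matrix.mul_assoc, h1', Matrix.mul_one]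
  refine ⟨hXeq, ?_⟩
  rintro lam ⟨v, hv, hHv⟩
  -- lam ≥ 0
  have hvv : 0 < v ⬝ᵥ v := by
    have := Matrix.dotProduct_star_self_pos_iff (v := v)
    simp only [star_trivial] at this
    exact this.mpr hv
  have hlam : 0 ≤ lam := by
    have h := hHpsd.dotProduct_mulVec_nonneg v
    rw [hHv, star_trivial, dotProduct_smul, smul_eq_mul] at h
    nlinarith
  have h1mH : (1 - H) *ᵥ v = (1 - lam) • v := by
    rw [Matrix.sub_mulVec, Matrix.one_mulVec, hHv, sub_smul, one_smul]
  have h1mlam : 0 < 1 - lam := by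
    have h := hIH.dotProduct_mulVec_pos hv
    rw [h1mH, star_trivial, dotProduct_smul, smul_eq_mul] at h
    nlinarith
  have hinv : (1 - H)⁻¹ *ᵥ v = (1 - lam)⁻¹ • v := by
    calc (1 - H)⁻¹ *ᵥ v
        = (1 - H)⁻¹ *ᵥ ((1 - lam)⁻¹ • ((1 - lam) • v)) := by
          rw [smul_smul, inv_mul_cancel₀ h1mlam.ne', one_smul]
      _ = (1 - lam)⁻¹ • ((1 - H)⁻¹ *ᵥ ((1 - H) *ᵥ v)) := by rw [← h1mH, Matrix.mulVec_smul]
      _ = (1 - lam)⁻¹ • v := by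
          rw [Matrix.mulVec_mulVec, Matrix.nonsing_inv_mul _ hIHdet, Matrix.one_mulVec]
  refine ⟨⟨v, hv, ?_⟩, div_nonneg hlam h1mlam.le⟩
  have hne := h1mlam.ne'
  have hfrac : lam / (1 - lam) = (1 - lam)⁻¹ - 1 := by field_simp; ring
  rw [hXeq, Matrix.sub_mulVec, Matrix.one_mulVec, hinv, hfrac, sub_smul, one_smul]
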